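/- arXiv:1812.05873 — 4 statements merged into one kernel-verified Lean document; each statement's English description precedes it below -/
import Mathlib

section
/- Let I be a finite index set and l, r, c : I → ℝ≥0. If the three multisets {{ 2·l(i) + c(i) : i ∈ I }}, {{ 2·r(i) + c(i) : i ∈ I }}, and {{ l(i) + r(i) + c(i) : i ∈ I }} are pairwise equal as multisets, then l(i) = r(i) for every i ∈ I. -/
theorem multiset_eq_implies_pointwise_eq {I : Type*} [Fintype I]
    (l r c : I → ℝ) (hl : ∀ i, 0 ≤ l i) (hr : ∀ i, 0 ≤ r i) (hc : ∀ i, 0 ≤ c i)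
    (h1 : (Finset.univ.val.map (fun i : I => 2 * l i + c i)) =
          (Finset.univ.val.map (fun i : I => 2 * r i + c i)))
    (h2 : (Finset.univ.val.map (fun i : I => 2 * l i + c i)) =
          (Finset.univ.val.map (fun i : I => l i + r i + c i)))
    (h3 : (Finset.univ.val.map (fun i : I => 2 * r i + c i)) =
          (Finset.univ.val.map (fun i : I => l i + r i + c i))) :
    ∀ i : I, l i = r i := by
  have sq : ∀ f g : I → ℝ,
      (Finset.univ.val.map f) = (Finset.univ.val.map g) →
      ∑ i, (f i)^2 = ∑ i, (g i)^2 := by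
    intro f g h
    have key := congrArg (fun m : Multiset ℝ => (m.map (fun x => x^2)).sum) h
    simp only [Multiset.map_map, Function.comp] at key
    exact key
  have e2 := sq _ _ h2
  have e3 := sq _ _ h3
  have key : ∑ i, (l i - r i)^2 = 0 := by
    have : ∑ i, (l i - r i)^2 =
        (∑ i, (2 * l i + c i)^2 + ∑ i, (2 * r i + c i)^2
          - 2 * ∑ i, (l i + r i + c i)^2) / 2 := by
      rw [← Finset.sum_add_distrib, Finset.mul_sum, ← Finset.sum_sub_distrib,
        Finset.sum_div]
      exact Finset.sum_congr rfl fun i _ => by ring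
    rw [this, e2, e3]; ring
  intro i
  have h0 := (Finset.sum_eq_zero_iff_of_nonneg
    (fun i _ => sq_nonneg (l i - r i))).mp key i (Finset.mem_univ i)
  have := sq_eq_zero_iff.mp h0
  linarith
end

section
/- Let p : A × B → ℝ≥0 be a weight function over finite sets with marginal m(a) = ∑_b p(a,b). Then p satisfies functional dependence of the second coordinate on the first (i.e., p(a,b) > 0 and p(a,b') > 0 imply b = b') if and only if for all a ∈ A and b ∈ B, p(a,b)·p(a,b) = p(a,b)·m(a). -/
theorem dep_iff_self_independence {A B : Type*} [Fintype A] [Fintype B]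
    (p : A × B → ℝ) (hp : ∀ x, 0 ≤ p x) :
    (∀ (a : A) (b b' : B), 0 < p (a, b) → 0 < p (a, b') → b = b') ↔
    (∀ (a : A) (b : B), p (a, b) * p (a, b) = p (a, b) * ∑ b', p (a, b')) := by
  constructor
  · intro h a b
    rcases eq_or_lt_of_le (hp (a, b)) with h0 | h0
    · rw [← h0]; ring
    · congr 1
      rw [eq_comm, Finset.sum_eq_single b]
      · intro b' _ hne
        by_contra hne'
        exact hne (h a b' b (lt_of_le_of_ne (hp _) (Ne.symm hne')) h0)
      · intro hb; exact absurd (Finset.mem_univ b) hb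
  · intro h a b b' hb hb'
    classical
    by_contra hne
    have key := h a b
    have hsum : p (a, b) = ∑ c, p (a, c) := by
      have := mul_left_cancel₀ (ne_of_gt hb) key
      exact this
    have : p (a, b) + p (a, b') ≤ ∑ c, p (a, c) := by
      have := Finset.add_sum_erase Finset.univ (fun c => p (a, c)) (Finset.mem_univ b)
      rw [← this]
      gcongr
      have hmem : b' ∈ Finset.univ.erase b := Finset.mem_erase.mpr ⟨fun h => hne h.symm, Finset.mem_univ _⟩
      exact Finset.single_le_sum (fun c _ => hp (a, c)) hmem
    linarith
end

section
/- Let p : A × B → ℝ≥0 be a weight function over finite sets with marginal m(a) = ∑_b p(a,b). Then the multiset of positive values {{ p(a,b) : p(a,b) > 0 }} equals the multiset of positive values {{ m(a) : m(a) > 0 }} if and only if p satisfies functional dependence of the second coordinate on the first (p(a,b) > 0 and p(a,b') > 0 imply b = b'). -/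
theorem multiset_eq_iff_dep {A B : Type*} [Fintype A] [Fintype B]
    [DecidableEq A] [DecidableEq B]
    (p : A × B → ℝ) (hp : ∀ x, 0 ≤ p x) :
    ((Finset.univ.filter (fun ab : A × B => 0 < p ab)).val.map p =
      (Finset.univ.filter (fun a : A => 0 < ∑ b, p (a, b))).val.map
        (fun a => ∑ b, p (a, b))) ↔
    (∀ (a : A) (b b' : B), 0 < p (a, b) → 0 < p (a, b') → b = b') := by
  classical
  set S := Finset.univ.filter (fun ab : A × B => 0 < p ab) with hS
  set T := Finset.univ.filter (fun a : A => 0 < ∑ b, p (a, b)) with hT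
  constructor
  · intro h a₀ b b' hb hb'
    by_contra hne
    have hcard : S.card = T.card := by
      have := congrArg Multiset.card h
      simpa using this
    set g : A → B := fun a =>
      if a = a₀ then b else if h : ∃ c, 0 < p (a, c) then h.choose else b with hg
    have hgspec : ∀ a ∈ T, 0 < p (a, g a) := by
      intro a ha
      rw [hT, Finset.mem_filter] at ha
      by_cases hc : a = a₀
      · subst hc; simpa [hg] using hb
      · have hex : ∃ c, 0 < p (a, c) := by
          by_contra hno
          push_neg at hno
          have : ∑ c, p (a, c) = 0 :=
            Finset.sum_eq_zero (fun c _ => le_antisymm (hno c) (hp _))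
          linarith [ha.2]
        simp only [hg, if_neg hc, dif_pos hex]
        exact hex.choose_spec
    have hsub : T.image (fun a => (a, g a)) ⊂ S := by
      constructor
      · intro x hx
        rw [Finset.mem_image] at hx
        obtain ⟨a, ha, rfl⟩ := hx
        rw [hS, Finset.mem_filter]
        exact ⟨Finset.mem_univ _, hgspec a ha⟩
      · intro hsup
        have hmem : (a₀, b') ∈ S := by
          rw [hS, Finset.mem_filter]; exact ⟨Finset.mem_univ _, hb'⟩
        have := hsup hmem
        rw [Finset.mem_image] at this
        obtain ⟨a, _, heq⟩ := this
        have ha : a = a₀ := (Prod.mk.injEq _ _ _ _ ▸ heq).1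
        subst ha
        have : g a = b' := (Prod.mk.injEq _ _ _ _ ▸ heq).2
        rw [hg] at this
        simp only [if_pos rfl] at this
        exact hne this
    have hlt : T.card < S.card := by
      have h1 : (T.image (fun a => (a, g a))).card = T.card :=
        Finset.card_image_of_injective _ (fun x y hxy => (Prod.mk.injEq _ _ _ _ ▸ hxy).1)
      calc T.card = (T.image (fun a => (a, g a))).card := h1.symm
        _ < S.card := Finset.card_lt_card hsub
    omega
  · intro hdep
    have hproj : ∀ ab ∈ S, p ab = ∑ c, p (ab.1, c) := by
      intro ab hab
      rw [hS, Finset.mem_filter] at hab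
      have := hab.2
      rw [Finset.sum_eq_single ab.2]
      · intro c _ hc
        by_contra hc0
        have hcpos : 0 < p (ab.1, c) := lt_of_le_of_ne (hp _) (Ne.symm hc0)
        exact hc (hdep ab.1 c ab.2 hcpos this)
      · intro hcu; exact absurd (Finset.mem_univ _) hcu
    have himg : S.image Prod.fst = T := by
      ext a
      rw [Finset.mem_image]
      constructor
      · rintro ⟨ab, hab, rfl⟩
        rw [hT, Finset.mem_filter]
        refine ⟨Finset.mem_univ _, ?_⟩
        rw [hS, Finset.mem_filter] at hab
        calc (0:ℝ) < p ab := hab.2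
          _ = ∑ c, p (ab.1, c) := hproj ab (by rw [hS, Finset.mem_filter]; exact hab)
      · intro ha
        rw [hT, Finset.mem_filter] at ha
        have hex : ∃ c, 0 < p (a, c) := by
          by_contra hno
          push_neg at hno
          have : ∑ c, p (a, c) = 0 :=
            Finset.sum_eq_zero (fun c _ => le_antisymm (hno c) (hp _))
          linarith [ha.2]
        obtain ⟨c, hc⟩ := hex
        exact ⟨(a, c), by rw [hS, Finset.mem_filter]; exact ⟨Finset.mem_univ _, hc⟩, rfl⟩
    have hinj : Set.InjOn Prod.fst (S : Set (A × B)) := by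
      intro x hx y hy hxy
      simp only [Finset.coe_filter, Set.mem_setOf_eq, hS] at hx hy
      have : x.2 = y.2 := hdep x.1 x.2 y.2 hx.2 (hxy ▸ hy.2)
      exact Prod.ext hxy this
    have hval : S.val.map Prod.fst = T.val := by
      rw [← himg, Finset.image_val_of_injOn hinj]
    calc S.val.map p = (S.val.map Prod.fst).map (fun a => ∑ b, p (a, b)) := by
          rw [Multiset.map_map]
          exact Multiset.map_congr rfl (fun ab hab => hproj ab hab)
      _ = T.val.map (fun a => ∑ b, p (a, b)) := by rw [hval]
end

section
/- Let p : A^m × A^m → ℝ≥0 be a weight function on pairs of m-tuples over a finite set A of size n, and for each i ∈ A^m set l_i = ∑_{j ≠ i} p(i,j), r_i = ∑_{j ≠ i} p(j,i), and c_i = p(i,i). If l_i = r_i for all i ∈ A^m, then the three families (2l_i + c_i)_i, (2r_i + c_i)_i, (l_i + r_i + c_i)_i coincide pointwise; conversely, if the three multisets {{2l_i + c_i}}, {{2r_i + c_i}}, {{l_i + r_i + c_i}} are pairwise equal, then l_i = r_i for all i. -/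
theorem marginal_identity_definable_from_equivalence
    {A : Type*} [Fintype A] [DecidableEq A] (m : ℕ) (hm : 1 ≤ m)
    (hA : 1 ≤ Fintype.card A)
    (p : (Fin m → A) × (Fin m → A) → ℝ) (hp : ∀ x, 0 ≤ p x) :
    let l : (Fin m → A) → ℝ := fun i => ∑ j ∈ Finset.univ \ {i}, p (i, j)
    let r : (Fin m → A) → ℝ := fun i => ∑ j ∈ Finset.univ \ {i}, p (j, i)
    let c : (Fin m → A) → ℝ := fun i => p (i, i)
    ((∀ i, l i = r i) →
      (∀ i, 2 * l i + c i = 2 * r i + c i) ∧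
      (∀ i, 2 * r i + c i = l i + r i + c i)) ∧
    (((Finset.univ.val.map (fun i => 2 * l i + c i)) =
        (Finset.univ.val.map (fun i => 2 * r i + c i)) ∧
      (Finset.univ.val.map (fun i => 2 * l i + c i)) =
        (Finset.univ.val.map (fun i => l i + r i + c i)) ∧
      (Finset.univ.val.map (fun i => 2 * r i + c i)) =
        (Finset.univ.val.map (fun i => l i + r i + c i))) →
      ∀ i, l i = r i) := by
  intro l r c
  constructor
  · intro h
    exact ⟨fun i => by rw [h i], fun i => by rw [h i]; ring⟩
  · rintro ⟨h1, h2, h3⟩ i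
    have key : ∀ (f g : (Fin m → A) → ℝ),
        Finset.univ.val.map f = Finset.univ.val.map g →
        ∑ j, (f j) ^ 2 = ∑ j, (g j) ^ 2 := by
      intro f g h
      have h2 := congrArg (fun s => (Multiset.map (fun x : ℝ => x ^ 2) s).sum) h
      simp only [Multiset.map_map, Function.comp] at h2
      exact h2
    have e1 := key _ _ h1
    have e2 := key _ _ h2
    have hz : ∑ j, ((2 * l j + c j) - (2 * r j + c j)) ^ 2 / 4 = 0 := by
      have h0 : ∑ j, (((2 * l j + c j) ^ 2 + (2 * r j + c j) ^ 2) / 2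
          - (l j + r j + c j) ^ 2) = 0 := by
        rw [Finset.sum_sub_distrib, ← Finset.sum_div, Finset.sum_add_distrib]
        linarith [e1, e2]
      rw [← h0]
      exact Finset.sum_congr rfl (fun j _ => by ring)
    have hnn : ∀ j ∈ Finset.univ, 0 ≤ ((2 * l j + c j) - (2 * r j + c j)) ^ 2 / 4 :=
      fun j _ => by positivity
    have := (Finset.sum_eq_zero_iff_of_nonneg hnn).mp hz i (Finset.mem_univ i)
    nlinarith [this]
end
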